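/- (Proposition 1.) Let H ⊆ Σ* be a finite language and w : Σ* → ℝ a per-string earliness function, and suppose there exists a nonempty language K ⊆ H controllable with respect to the plant language L. Then there exists a nonempty controllable sublanguage K̂_* ⊆ H such that for every nonempty controllable sublanguage K ⊆ H: (1) e(K̂_*) ≤ e(K), and (2) if e(K) = e(K̂_*) then K ⊆ K̂_*. -/

import Mathlib

/-- Prefix closure of a language: all strings that can be extended to a member. -/
def pref {α : Type*} (K : Set (List α)) : Set (List α) := {s | ∃ t, s ++ t ∈ K}

/-- A language `K` is controllable w.r.t. the plant language `L` (with uncontrollable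
events `Suc`) if `pref(K)·Suc ∩ L ⊆ pref(K)`. -/
def Controllable {α : Type*} (Suc : Set α) (L K : Set (List α)) : Prop :=
  ∀ s ∈ pref K, ∀ u ∈ Suc, s ++ [u] ∈ L → s ++ [u] ∈ pref K

/-- A language is prefix-closed. -/
def PrefixClosed {α : Type*} (L : Set (List α)) : Prop :=
  ∀ s ∈ L, ∀ t : List α, t <+: s → t ∈ L
/-- Proposition 1: If the finite language `H` contains some nonempty
controllable sublanguage, then there is a supremal minimum-earliness controllable
sublanguage `Khat ⊆ H`: its earliness `e(Khat) = max_{s ∈ Khat} w s` is minimal among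
nonempty controllable sublanguages of `H`, and any nonempty controllable sublanguage
of `H` achieving the same earliness is contained in it. -/
theorem supremal_minimum_earliness {α : Type*} [Fintype α] (Sc Suc : Set α)
    (hpart : Sc ∪ Suc = Set.univ) (hdisj : Disjoint Sc Suc)
    (L : Set (List α)) (hL : PrefixClosed L)
    (H : Set (List α)) (hHfin : H.Finite) (w : List α → ℝ)
    (hex : ∃ K : Set (List α), K ⊆ H ∧ K.Nonempty ∧ Controllable Suc L K) :
    ∃ Khat : Set (List α), Khat ⊆ H ∧ Khat.Nonempty ∧ Controllable Suc L Khat ∧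
      ∀ K : Set (List α), K ⊆ H → K.Nonempty → Controllable Suc L K →
        sSup (w '' Khat) ≤ sSup (w '' K) ∧
        (sSup (w '' K) = sSup (w '' Khat) → K ⊆ Khat) := by
  classical
  set 𝒦 : Set (Set (List α)) := {K | K ⊆ H ∧ K.Nonempty ∧ Controllable Suc L K} with h𝒦
  have h𝒦ne : 𝒦.Nonempty := by
    obtain ⟨K, h1, h2, h3⟩ := hex; exact ⟨K, h1, h2, h3⟩
  set V : Set ℝ := (fun K => sSup (w '' K)) '' 𝒦 with hV
  have hVsub : V ⊆ w '' H := by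
    rintro x ⟨K, ⟨hKH, hKne, _⟩, rfl⟩
    have hfin : (w '' K).Finite := (hHfin.subset hKH).image w
    have hmem : sSup (w '' K) ∈ w '' K := (hKne.image w).csSup_mem hfin
    exact Set.image_mono (f := w) hKH hmem
  have hVfin : V.Finite := (hHfin.image w).subset hVsub
  have hVne : V.Nonempty := h𝒦ne.image _
  obtain ⟨m, hmV, hmin⟩ : ∃ m ∈ V, ∀ x ∈ V, m ≤ x := by
    obtain ⟨m, hmV, hmin⟩ := Set.Finite.exists_minimalFor id V hVfin hVne
    exact ⟨m, hmV, fun x hx => le_of_not_gt fun hlt => absurd (hmin hx hlt.le) (by simpa using hlt)⟩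
  obtain ⟨K0, hK0𝒦, hK0m⟩ := hmV
  set F : Set (Set (List α)) := {K | K ∈ 𝒦 ∧ sSup (w '' K) = m} with hF
  set Khat : Set (List α) := ⋃₀ F with hKhat
  have hK0F : K0 ∈ F := ⟨hK0𝒦, hK0m⟩
  have hKhatH : Khat ⊆ H := by
    rintro s ⟨K, ⟨⟨hKH, _, _⟩, _⟩, hs⟩; exact hKH hs
  have hKhatne : Khat.Nonempty := by
    obtain ⟨s, hs⟩ := hK0𝒦.2.1
    exact ⟨s, K0, hK0F, hs⟩
  have hctrl : Controllable Suc L Khat := by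
    rintro s ⟨t, hst⟩ u hu hL'
    obtain ⟨K, hKF, hstK⟩ := hst
    obtain ⟨t', ht'⟩ := hKF.1.2.2 s ⟨t, hstK⟩ u hu hL'
    exact ⟨t', K, hKF, ht'⟩
  have hfinKhat : (w '' Khat).Finite := (hHfin.subset hKhatH).image w
  have hbddKhat : BddAbove (w '' Khat) := hfinKhat.bddAbove
  have hle : sSup (w '' Khat) ≤ m := by
    apply csSup_le (hKhatne.image w)
    rintro x ⟨s, ⟨K, hKF, hsK⟩, rfl⟩
    have hbdd : BddAbove (w '' K) := ((hHfin.subset hKF.1.1).image w).bddAbove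
    calc w s ≤ sSup (w '' K) := le_csSup hbdd ⟨s, hsK, rfl⟩
      _ = m := hKF.2
  have hge : m ≤ sSup (w '' Khat) := by
    rw [← hK0m]
    exact csSup_le_csSup hbddKhat (hK0𝒦.2.1.image w)
      (Set.image_mono (f := w) fun s hs => ⟨K0, hK0F, hs⟩)
  have hKhatm : sSup (w '' Khat) = m := le_antisymm hle hge
  refine ⟨Khat, hKhatH, hKhatne, hctrl, fun K hKH hKne hKc => ?_⟩
  have hKV : sSup (w '' K) ∈ V := ⟨K, ⟨hKH, hKne, hKc⟩, rfl⟩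
  constructor
  · rw [hKhatm]; exact hmin _ hKV
  · intro heq s hs
    exact ⟨K, ⟨⟨hKH, hKne, hKc⟩, heq.trans hKhatm⟩, hs⟩
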